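/- arXiv:2403.03057 — 5 statements merged into one kernel-verified Lean document; each statement's English description precedes it below -/
import Mathlib

section
/- For any set of lifelines L ⊆ ℒ, any H ⊆ L, and any interaction i ∈ 𝕀(L), the multi-trace semantics commutes with lifeline removal: σ_{L∖H}(rmv_H(i)) = rmv_H(σ_L(i)). -/
open scoped Classical

namespace RV

/-- A communication action: a lifeline, a kind (`true` = emission `!`,
`false` = reception `?`) and a message. -/
structure Action (Λ M : Type) where
  lifeline : Λ
  kind : Bool
  msg : M

/-- The interaction language: empty interaction, actions, the three loop
operators and the four binary operators. -/
inductive Interaction (Λ M : Type) : Type where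
  | empty : Interaction Λ M
  | act : Action Λ M → Interaction Λ M
  | loopS : Interaction Λ M → Interaction Λ M
  | loopW : Interaction Λ M → Interaction Λ M
  | loopP : Interaction Λ M → Interaction Λ M
  | strict : Interaction Λ M → Interaction Λ M → Interaction Λ M
  | seq : Interaction Λ M → Interaction Λ M → Interaction Λ M
  | par : Interaction Λ M → Interaction Λ M → Interaction Λ M
  | alt : Interaction Λ M → Interaction Λ M → Interaction Λ M

variable {Λ M : Type}

/-- `i ∈ 𝕀(L)` : all actions of `i` occur on lifelines belonging to `L`. -/
def Interaction.lifelinesIn (L : Set Λ) : Interaction Λ M → Prop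
  | .empty => True
  | .act a => a.lifeline ∈ L
  | .loopS i => i.lifelinesIn L
  | .loopW i => i.lifelinesIn L
  | .loopP i => i.lifelinesIn L
  | .strict i1 i2 => i1.lifelinesIn L ∧ i2.lifelinesIn L
  | .seq i1 i2 => i1.lifelinesIn L ∧ i2.lifelinesIn L
  | .par i1 i2 => i1.lifelinesIn L ∧ i2.lifelinesIn L
  | .alt i1 i2 => i1.lifelinesIn L ∧ i2.lifelinesIn L

/-- Lifeline removal `rmv_H` on interactions : actions occurring on a
lifeline of `H` are replaced by the empty interaction, the term structure
is preserved (no simplification). -/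
noncomputable def rmv (H : Set Λ) : Interaction Λ M → Interaction Λ M
  | .empty => .empty
  | .act a => if a.lifeline ∈ H then .empty else .act a
  | .loopS i => .loopS (rmv H i)
  | .loopW i => .loopW (rmv H i)
  | .loopP i => .loopP (rmv H i)
  | .strict i1 i2 => .strict (rmv H i1) (rmv H i2)
  | .seq i1 i2 => .seq (rmv H i1) (rmv H i2)
  | .par i1 i2 => .par (rmv H i1) (rmv H i2)
  | .alt i1 i2 => .alt (rmv H i1) (rmv H i2)

/-- The subterm of an interaction at a position (Dewey notation,
`false` = child 1, `true` = child 2); `none` when the position is invalid.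
The positions of `i` are exactly those `p` with `(subtermAt i p).isSome`,
and the symbol `i(p)` is the head symbol of `subtermAt i p`. -/
def subtermAt : Interaction Λ M → List Bool → Option (Interaction Λ M)
  | i, [] => some i
  | .loopS i, false :: p => subtermAt i p
  | .loopW i, false :: p => subtermAt i p
  | .loopP i, false :: p => subtermAt i p
  | .strict i1 _, false :: p => subtermAt i1 p
  | .strict _ i2, true :: p => subtermAt i2 p
  | .seq i1 _, false :: p => subtermAt i1 p
  | .seq _ i2, true :: p => subtermAt i2 p
  | .par i1 _, false :: p => subtermAt i1 p
  | .par _ i2, true :: p => subtermAt i2 p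
  | .alt i1 _, false :: p => subtermAt i1 p
  | .alt _ i2, true :: p => subtermAt i2 p
  | _, _ => none

/-- A multi-trace : one local trace per lifeline (components on lifelines
outside the relevant set `L` are required to be empty, see
`MultiTrace.over`). -/
abbrev MultiTrace (Λ M : Type) := Λ → List (Action Λ M)

namespace MultiTrace

/-- `a ∧ μ` : prepend action `a` to the component of `μ` on `θ(a)`. -/
noncomputable def prepend (a : Action Λ M) (μ : MultiTrace Λ M) : MultiTrace Λ M :=
  fun l => if l = a.lifeline then a :: μ l else μ l

/-- `μ ∧ a` : append action `a` to the component of `μ` on `θ(a)`. -/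
noncomputable def append (μ : MultiTrace Λ M) (a : Action Λ M) : MultiTrace Λ M :=
  fun l => if l = a.lifeline then μ l ++ [a] else μ l

/-- The empty multi-trace `ε_L`. -/
def eps : MultiTrace Λ M := fun _ => []

/-- `μ ∈ 𝕄(L)` : components vanish outside `L` and every action of the
component on `l` occurs on `l`. -/
def over' (L : Set Λ) (μ : MultiTrace Λ M) : Prop :=
  (∀ l ∉ L, μ l = []) ∧ ∀ l, ∀ a ∈ μ l, a.lifeline = l

/-- Lifeline removal `rmv_H` on multi-traces : restriction of the tuple of
components to `L ∖ H` (removed components become empty). -/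
noncomputable def rmv (H : Set Λ) (μ : MultiTrace Λ M) : MultiTrace Λ M :=
  fun l => if l ∈ H then [] else μ l

/-- Strict sequencing `μ1 ; μ2` of multi-traces : componentwise
concatenation. -/
def concat (μ1 μ2 : MultiTrace Λ M) : MultiTrace Λ M := fun l => μ1 l ++ μ2 l

/-- Multi-prefix relation : componentwise word prefix. -/
def isPrefixOf (μ' μ : MultiTrace Λ M) : Prop := ∀ l, μ' l <+: μ l

end MultiTrace

/-- Interleaving `μ ∈ μ1 || μ2` of multi-traces. -/
inductive MTShuffle : MultiTrace Λ M → MultiTrace Λ M → MultiTrace Λ M → Prop where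
  | nilL (μ : MultiTrace Λ M) : MTShuffle MultiTrace.eps μ μ
  | nilR (μ : MultiTrace Λ M) : MTShuffle μ MultiTrace.eps μ
  | left {μ1 μ2 μ : MultiTrace Λ M} (a : Action Λ M) :
      MTShuffle μ1 μ2 μ → MTShuffle (MultiTrace.prepend a μ1) μ2 (MultiTrace.prepend a μ)
  | right {μ1 μ2 μ : MultiTrace Λ M} (a : Action Λ M) :
      MTShuffle μ1 μ2 μ → MTShuffle μ1 (MultiTrace.prepend a μ2) (MultiTrace.prepend a μ)

/-- Interleaving (shuffle) `t ∈ t1 || t2` of global traces (words). -/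
inductive ListShuffle {α : Type} : List α → List α → List α → Prop where
  | nil : ListShuffle [] [] []
  | left {t1 t2 t : List α} (a : α) : ListShuffle t1 t2 t → ListShuffle (a :: t1) t2 (a :: t)
  | right {t1 t2 t : List α} (a : α) : ListShuffle t1 t2 t → ListShuffle t1 (a :: t2) (a :: t)

/-- Conflict predicate `t ⫫ l` : the trace `t` contains an action on `l`. -/
def conflicts (t : List (Action Λ M)) (l : Λ) : Prop := ∃ a ∈ t, a.lifeline = l

/-- Weak sequencing `t ∈ t1 ;⫫ t2` of global traces : actions of `t2` may
be anticipated only when the remaining part of `t1` has no conflict on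
their lifeline. -/
inductive WeakSeq : List (Action Λ M) → List (Action Λ M) → List (Action Λ M) → Prop where
  | nilL (t : List (Action Λ M)) : WeakSeq [] t t
  | nilR (t : List (Action Λ M)) : WeakSeq t [] t
  | left {t1 t2 t : List (Action Λ M)} (a1 : Action Λ M) :
      WeakSeq t1 t2 t → WeakSeq (a1 :: t1) t2 (a1 :: t)
  | right {t1 t2 t : List (Action Λ M)} (a2 : Action Λ M) :
      ¬ conflicts t1 a2.lifeline → WeakSeq t1 t2 t → WeakSeq t1 (a2 :: t2) (a2 :: t)

/-- Projection `π_L` of a global trace onto a multi-trace. -/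
noncomputable def proj : List (Action Λ M) → MultiTrace Λ M
  | [] => MultiTrace.eps
  | a :: t => MultiTrace.prepend a (proj t)

/-- Elementwise strict sequencing on sets of multi-traces. -/
def concatSet (S1 S2 : Set (MultiTrace Λ M)) : Set (MultiTrace Λ M) :=
  {μ | ∃ μ1 ∈ S1, ∃ μ2 ∈ S2, μ = MultiTrace.concat μ1 μ2}

/-- Elementwise interleaving on sets of multi-traces. -/
def shuffleSet (S1 S2 : Set (MultiTrace Λ M)) : Set (MultiTrace Λ M) :=
  {μ | ∃ μ1 ∈ S1, ∃ μ2 ∈ S2, MTShuffle μ1 μ2 μ}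

/-- `S^{;n}`. -/
def powConcat (S : Set (MultiTrace Λ M)) : ℕ → Set (MultiTrace Λ M)
  | 0 => {MultiTrace.eps}
  | n + 1 => concatSet S (powConcat S n)

/-- Kleene closure `S^{;*}`. -/
def kleeneConcat (S : Set (MultiTrace Λ M)) : Set (MultiTrace Λ M) := ⋃ n, powConcat S n

/-- `S^{||n}`. -/
def powShuffle (S : Set (MultiTrace Λ M)) : ℕ → Set (MultiTrace Λ M)
  | 0 => {MultiTrace.eps}
  | n + 1 => shuffleSet S (powShuffle S n)

/-- Kleene closure `S^{||*}`. -/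
def kleeneShuffle (S : Set (MultiTrace Λ M)) : Set (MultiTrace Λ M) := ⋃ n, powShuffle S n

/-- The multi-trace semantics `σ_L : 𝕀(L) → 𝒫(𝕄(L))`. -/
noncomputable def sem : Interaction Λ M → Set (MultiTrace Λ M)
  | .empty => {MultiTrace.eps}
  | .act a => {MultiTrace.prepend a MultiTrace.eps}
  | .alt i1 i2 => sem i1 ∪ sem i2
  | .strict i1 i2 => concatSet (sem i1) (sem i2)
  | .seq i1 i2 => concatSet (sem i1) (sem i2)
  | .par i1 i2 => shuffleSet (sem i1) (sem i2)
  | .loopS i => kleeneConcat (sem i)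
  | .loopW i => kleeneConcat (sem i)
  | .loopP i => kleeneShuffle (sem i)

/-- Multi-prefix closure `\overline{S}` of a set of multi-traces. -/
def prefixClosure (S : Set (MultiTrace Λ M)) : Set (MultiTrace Λ M) :=
  {μ' | ∃ μ ∈ S, MultiTrace.isPrefixOf μ' μ}

/-- Termination predicate `i ↓` : `i` accepts the empty (multi-)trace. -/
inductive Terminates : Interaction Λ M → Prop where
  | empty : Terminates .empty
  | altL {i1 i2 : Interaction Λ M} : Terminates i1 → Terminates (.alt i1 i2)
  | altR {i1 i2 : Interaction Λ M} : Terminates i2 → Terminates (.alt i1 i2)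
  | strict {i1 i2 : Interaction Λ M} : Terminates i1 → Terminates i2 → Terminates (.strict i1 i2)
  | seq {i1 i2 : Interaction Λ M} : Terminates i1 → Terminates i2 → Terminates (.seq i1 i2)
  | par {i1 i2 : Interaction Λ M} : Terminates i1 → Terminates i2 → Terminates (.par i1 i2)
  | loopS (i : Interaction Λ M) : Terminates (.loopS i)
  | loopW (i : Interaction Λ M) : Terminates (.loopW i)
  | loopP (i : Interaction Λ M) : Terminates (.loopP i)

/-- Collision predicate `i ⫫̸ l` : every trace of `i` contains an action
on lifeline `l`. -/
inductive Collides : Interaction Λ M → Λ → Prop where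
  | act {a : Action Λ M} {l : Λ} : a.lifeline = l → Collides (.act a) l
  | alt {i1 i2 : Interaction Λ M} {l : Λ} :
      Collides i1 l → Collides i2 l → Collides (.alt i1 i2) l
  | strictL {i1 i2 : Interaction Λ M} {l : Λ} : Collides i1 l → Collides (.strict i1 i2) l
  | strictR {i1 i2 : Interaction Λ M} {l : Λ} : Collides i2 l → Collides (.strict i1 i2) l
  | seqL {i1 i2 : Interaction Λ M} {l : Λ} : Collides i1 l → Collides (.seq i1 i2) l
  | seqR {i1 i2 : Interaction Λ M} {l : Λ} : Collides i2 l → Collides (.seq i1 i2) l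
  | parL {i1 i2 : Interaction Λ M} {l : Λ} : Collides i1 l → Collides (.par i1 i2) l
  | parR {i1 i2 : Interaction Λ M} {l : Λ} : Collides i2 l → Collides (.par i1 i2) l

/-- Pruning relation `i ≃^⫫_l i'`. -/
inductive Prunes : Interaction Λ M → Λ → Interaction Λ M → Prop where
  | empty (l : Λ) : Prunes .empty l .empty
  | act {a : Action Λ M} {l : Λ} : a.lifeline ≠ l → Prunes (.act a) l (.act a)
  | strict {i1 i2 i1' i2' : Interaction Λ M} {l : Λ} :
      Prunes i1 l i1' → Prunes i2 l i2' → Prunes (.strict i1 i2) l (.strict i1' i2')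
  | seq {i1 i2 i1' i2' : Interaction Λ M} {l : Λ} :
      Prunes i1 l i1' → Prunes i2 l i2' → Prunes (.seq i1 i2) l (.seq i1' i2')
  | par {i1 i2 i1' i2' : Interaction Λ M} {l : Λ} :
      Prunes i1 l i1' → Prunes i2 l i2' → Prunes (.par i1 i2) l (.par i1' i2')
  | altBoth {i1 i2 i1' i2' : Interaction Λ M} {l : Λ} :
      Prunes i1 l i1' → Prunes i2 l i2' → Prunes (.alt i1 i2) l (.alt i1' i2')
  | altL {i1 i2 i1' : Interaction Λ M} {l : Λ} :
      Prunes i1 l i1' → Collides i2 l → Prunes (.alt i1 i2) l i1'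
  | altR {i1 i2 i2' : Interaction Λ M} {l : Λ} :
      Prunes i2 l i2' → Collides i1 l → Prunes (.alt i1 i2) l i2'
  | loopS {i1 i1' : Interaction Λ M} {l : Λ} :
      Prunes i1 l i1' → Prunes (.loopS i1) l (.loopS i1')
  | loopW {i1 i1' : Interaction Λ M} {l : Λ} :
      Prunes i1 l i1' → Prunes (.loopW i1) l (.loopW i1')
  | loopP {i1 i1' : Interaction Λ M} {l : Λ} :
      Prunes i1 l i1' → Prunes (.loopP i1) l (.loopP i1')
  | loopSElim {i1 : Interaction Λ M} {l : Λ} : Collides i1 l → Prunes (.loopS i1) l .empty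
  | loopWElim {i1 : Interaction Λ M} {l : Λ} : Collides i1 l → Prunes (.loopW i1) l .empty
  | loopPElim {i1 : Interaction Λ M} {l : Λ} : Collides i1 l → Prunes (.loopP i1) l .empty

/-- Execution relation `i →[a@p] i'` of the structural operational
semantics (positions over `{1,2}` encoded by `false`/`true`). -/
inductive Executes : Interaction Λ M → Action Λ M → List Bool → Interaction Λ M → Prop where
  | act (a : Action Λ M) : Executes (.act a) a [] .empty
  | altL {i1 i1' : Interaction Λ M} {a : Action Λ M} {p : List Bool} (i2 : Interaction Λ M) :
      Executes i1 a p i1' → Executes (.alt i1 i2) a (false :: p) i1'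
  | altR {i2 i2' : Interaction Λ M} {a : Action Λ M} {p : List Bool} (i1 : Interaction Λ M) :
      Executes i2 a p i2' → Executes (.alt i1 i2) a (true :: p) i2'
  | parL {i1 i1' : Interaction Λ M} {a : Action Λ M} {p : List Bool} (i2 : Interaction Λ M) :
      Executes i1 a p i1' → Executes (.par i1 i2) a (false :: p) (.par i1' i2)
  | parR {i2 i2' : Interaction Λ M} {a : Action Λ M} {p : List Bool} (i1 : Interaction Λ M) :
      Executes i2 a p i2' → Executes (.par i1 i2) a (true :: p) (.par i1 i2')
  | strictL {i1 i1' : Interaction Λ M} {a : Action Λ M} {p : List Bool} (i2 : Interaction Λ M) :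
      Executes i1 a p i1' → Executes (.strict i1 i2) a (false :: p) (.strict i1' i2)
  | strictR {i1 i2 i2' : Interaction Λ M} {a : Action Λ M} {p : List Bool} :
      Terminates i1 → Executes i2 a p i2' → Executes (.strict i1 i2) a (true :: p) i2'
  | seqL {i1 i1' : Interaction Λ M} {a : Action Λ M} {p : List Bool} (i2 : Interaction Λ M) :
      Executes i1 a p i1' → Executes (.seq i1 i2) a (false :: p) (.seq i1' i2)
  | seqR {i1 i1' i2 i2' : Interaction Λ M} {a : Action Λ M} {p : List Bool} :
      Prunes i1 a.lifeline i1' → Executes i2 a p i2' →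
      Executes (.seq i1 i2) a (true :: p) (.seq i1' i2')
  | loopS {i1 i1' : Interaction Λ M} {a : Action Λ M} {p : List Bool} :
      Executes i1 a p i1' → Executes (.loopS i1) a (false :: p) (.strict i1' (.loopS i1))
  | loopW {i1 i1' i'' : Interaction Λ M} {a : Action Λ M} {p : List Bool} :
      Executes i1 a p i1' → Prunes (.loopW i1) a.lifeline i'' →
      Executes (.loopW i1) a (false :: p) (.seq i'' (.seq i1' (.loopW i1)))
  | loopP {i1 i1' : Interaction Λ M} {a : Action Λ M} {p : List Bool} :
      Executes i1 a p i1' → Executes (.loopP i1) a (false :: p) (.par i1' (.loopP i1))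

/-- Vertices of the analysis graph : `Ok` or a pair of an interaction and a
multi-trace over a current set of lifelines `L`. -/
inductive Vertex (Λ M : Type) : Type where
  | ok : Vertex Λ M
  | node : Set Λ → Interaction Λ M → MultiTrace Λ M → Vertex Λ M

/-- Rule `⤳_o` : emission of the `Ok` verdict on an empty multi-trace. -/
inductive StepOk : Vertex Λ M → Vertex Λ M → Prop where
  | mk (L : Set Λ) (i : Interaction Λ M) :
      StepOk (.node L i MultiTrace.eps) .ok

/-- Rule `⤳_r` : removal of a set `H` of lifelines (with `∅ ⊊ H ⊊ L`)
whose components are all empty. -/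
inductive StepRmv : Vertex Λ M → Vertex Λ M → Prop where
  | mk (L H : Set Λ) (i : Interaction Λ M) (μ : MultiTrace Λ M) :
      H.Nonempty → H ⊂ L → (∀ l ∈ H, μ l = []) →
      StepRmv (.node L i μ) (.node (L \ H) (rmv H i) (MultiTrace.rmv H μ))

/-- Rule `⤳_e` : simultaneous consumption of the action at the head of a
component of the multi-trace and execution of a matching action of the
interaction. -/
inductive StepExec : Vertex Λ M → Vertex Λ M → Prop where
  | mk (L : Set Λ) (i i' : Interaction Λ M) (a : Action Λ M) (p : List Bool)
      (μ : MultiTrace Λ M) :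
      a.lifeline ∈ L → Executes i a p i' →
      StepExec (.node L i (MultiTrace.prepend a μ)) (.node L i' μ)

/-- The transition relation `⤳` of the analysis graph. -/
def Step (v w : Vertex Λ M) : Prop := StepOk v w ∨ StepRmv v w ∨ StepExec v w

/-- One-unambiguity `a ⊑1∈ i` : in the projection of `i` onto `θ(a)`,
there is a unique position at which `a` is immediately executable. -/
def OneUnambiguous (L : Set Λ) (a : Action Λ M) (i : Interaction Λ M) : Prop :=
  ∃! p : List Bool, ∃ i'' : Interaction Λ M, Executes (rmv (L \ {a.lifeline}) i) a p i''

/-- A local trace on lifeline `l` viewed as a multi-trace over `{l}`. -/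
noncomputable def localMT (l : Λ) (w : List (Action Λ M)) : MultiTrace Λ M :=
  fun l' => if l' = l then w else []

/-- Right-nested `seq`-composition of a list of interactions (`∅` for the
empty list). -/
def seqComp : List (Interaction Λ M) → Interaction Λ M
  | [] => .empty
  | [i] => i
  | i :: rest => .seq i (seqComp rest)

/-- The operational trace semantics `σ_op(i)` generated by the two rules
`i↓ ⟹ ε ∈ σ_op(i)` and `i →[a@p] i' ∧ t ∈ σ_op(i') ⟹ a.t ∈ σ_op(i)`. -/
inductive OpTrace : Interaction Λ M → List (Action Λ M) → Prop where
  | empty {i : Interaction Λ M} : Terminates i → OpTrace i []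
  | step {i i' : Interaction Λ M} {a : Action Λ M} {p : List Bool} {t : List (Action Λ M)} :
      Executes i a p i' → OpTrace i' t → OpTrace i (a :: t)



variable {Λ M : Type}

section Aux

lemma rmv_eps (H : Set Λ) :
    MultiTrace.rmv H (MultiTrace.eps : MultiTrace Λ M) = MultiTrace.eps := by
  funext l; by_cases h : l ∈ H <;> simp [MultiTrace.rmv, MultiTrace.eps, h]

lemma rmv_concat (H : Set Λ) (μ1 μ2 : MultiTrace Λ M) :
    MultiTrace.rmv H (MultiTrace.concat μ1 μ2)
      = MultiTrace.concat (MultiTrace.rmv H μ1) (MultiTrace.rmv H μ2) := by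
  funext l; by_cases h : l ∈ H <;> simp [MultiTrace.rmv, MultiTrace.concat, h]

lemma concat_eps (μ : MultiTrace Λ M) : MultiTrace.concat MultiTrace.eps μ = μ := by
  funext l; simp [MultiTrace.concat, MultiTrace.eps]

lemma concat_eps' (μ : MultiTrace Λ M) : MultiTrace.concat μ MultiTrace.eps = μ := by
  funext l; simp [MultiTrace.concat, MultiTrace.eps]

lemma prepend_concat (a : Action Λ M) (μ1 μ2 : MultiTrace Λ M) :
    MultiTrace.concat (MultiTrace.prepend a μ1) μ2
      = MultiTrace.prepend a (MultiTrace.concat μ1 μ2) := by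
  funext l; by_cases h : l = a.lifeline <;>
    simp [MultiTrace.concat, MultiTrace.prepend, h]

lemma rmv_prepend_mem {H : Set Λ} {a : Action Λ M} (h : a.lifeline ∈ H)
    (μ : MultiTrace Λ M) :
    MultiTrace.rmv H (MultiTrace.prepend a μ) = MultiTrace.rmv H μ := by
  funext l
  by_cases hl : l ∈ H
  · simp [MultiTrace.rmv, hl]
  · have : l ≠ a.lifeline := fun he => hl (he ▸ h)
    simp [MultiTrace.rmv, MultiTrace.prepend, hl, this]

lemma rmv_prepend_not {H : Set Λ} {a : Action Λ M} (h : a.lifeline ∉ H)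
    (μ : MultiTrace Λ M) :
    MultiTrace.rmv H (MultiTrace.prepend a μ)
      = MultiTrace.prepend a (MultiTrace.rmv H μ) := by
  funext l
  by_cases hl : l ∈ H
  · have : l ≠ a.lifeline := fun he => h (he ▸ hl)
    simp [MultiTrace.rmv, MultiTrace.prepend, hl, this]
  · by_cases he : l = a.lifeline <;>
      simp [MultiTrace.rmv, MultiTrace.prepend, hl, he, h]

lemma prepend_cancel {a : Action Λ M} {μ ν : MultiTrace Λ M}
    (h : MultiTrace.prepend a μ = MultiTrace.prepend a ν) : μ = ν := by
  funext l
  by_cases he : l = a.lifeline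
  · subst he
    have := congrFun h a.lifeline
    simpa [MultiTrace.prepend] using this
  · have := congrFun h l
    simpa [MultiTrace.prepend, he] using this

/-- Well-formed finite multi-traces : those built from `eps` by prepends. -/
inductive Built : MultiTrace Λ M → Prop where
  | eps : Built MultiTrace.eps
  | prepend (a : Action Λ M) {μ : MultiTrace Λ M} : Built μ → Built (MultiTrace.prepend a μ)

/-- Tail of a multi-trace at one component. -/
noncomputable def tailAt (μ : MultiTrace Λ M) (l : Λ) : MultiTrace Λ M :=
  fun l' => if l' = l then (μ l).tail else μ l'

lemma prepend_tailAt {μ : MultiTrace Λ M} {a : Action Λ M} {t : List (Action Λ M)}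
    (h : μ a.lifeline = a :: t) :
    μ = MultiTrace.prepend a (tailAt μ a.lifeline) := by
  funext l
  by_cases he : l = a.lifeline
  · subst he; simp [MultiTrace.prepend, tailAt, h]
  · simp [MultiTrace.prepend, tailAt, he]

lemma Built.inv : ∀ {ν : MultiTrace Λ M}, Built ν →
    ∀ (a : Action Λ M) (μ : MultiTrace Λ M), ν = MultiTrace.prepend a μ → Built μ := by
  intro ν hb
  induction hb with
  | eps =>
      intro a μ h
      have := congrFun h a.lifeline
      simp [MultiTrace.eps, MultiTrace.prepend] at this
  | prepend b hb' ih =>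
      intro a μ h
      rename_i μ'
      by_cases hlb : a.lifeline = b.lifeline
      · have hcomp := congrFun h b.lifeline
        simp [MultiTrace.prepend, hlb] at hcomp
        obtain ⟨hab, htl⟩ := hcomp
        subst hab
        have : μ' = μ := prepend_cancel h
        exact this ▸ hb'
      · -- decompose
        have hμlb : μ b.lifeline = b :: μ' b.lifeline := by
          have := congrFun h b.lifeline
          simpa [MultiTrace.prepend, Ne.symm hlb, fun h' => hlb h'] using this.symm
        have hdec : μ = MultiTrace.prepend b (tailAt μ b.lifeline) := prepend_tailAt hμlb
        have hμ' : μ' = MultiTrace.prepend a (tailAt μ b.lifeline) := by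
          funext l
          by_cases h1 : l = a.lifeline
          · subst h1
            have := congrFun h a.lifeline
            simp [MultiTrace.prepend, hlb] at this
            simp [MultiTrace.prepend, tailAt, hlb, ← this]
          · by_cases h2 : l = b.lifeline
            · subst h2
              simp [MultiTrace.prepend, h1, tailAt, hμlb]
            · have := congrFun h l
              simp [MultiTrace.prepend, h1, h2] at this
              simp [MultiTrace.prepend, h1, tailAt, h2, ← this]
        have hbuilt := ih a (tailAt μ b.lifeline) hμ'
        exact hdec ▸ Built.prepend b hbuilt

lemma Built.of_prepend {a : Action Λ M} {μ : MultiTrace Λ M}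
    (h : Built (MultiTrace.prepend a μ)) : Built μ :=
  h.inv a μ rfl

lemma Built.concat {μ1 μ2 : MultiTrace Λ M} (h1 : Built μ1) (h2 : Built μ2) :
    Built (MultiTrace.concat μ1 μ2) := by
  induction h1 with
  | eps => rw [concat_eps]; exact h2
  | prepend a hb ih => rw [prepend_concat]; exact ih.prepend a

lemma Built.shuffle {μ1 μ2 μ : MultiTrace Λ M} (h : MTShuffle μ1 μ2 μ)
    (h1 : Built μ1) (h2 : Built μ2) : Built μ := by
  induction h with
  | nilL => exact h2
  | nilR => exact h1
  | left a h ih => exact (ih h1.of_prepend h2).prepend a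
  | right a h ih => exact (ih h1 h2.of_prepend).prepend a

lemma shuffle_concat {μ1 : MultiTrace Λ M} (h1 : Built μ1) (μ2 : MultiTrace Λ M) :
    MTShuffle μ1 μ2 (MultiTrace.concat μ1 μ2) := by
  induction h1 with
  | eps => rw [concat_eps]; exact MTShuffle.nilL μ2
  | prepend a hb ih => rw [prepend_concat]; exact MTShuffle.left a ih

lemma rmv_shuffle {H : Set Λ} {μ1 μ2 μ : MultiTrace Λ M} (h : MTShuffle μ1 μ2 μ) :
    MTShuffle (MultiTrace.rmv H μ1) (MultiTrace.rmv H μ2) (MultiTrace.rmv H μ) := by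
  induction h with
  | nilL μ => rw [rmv_eps]; exact MTShuffle.nilL _
  | nilR μ => rw [rmv_eps]; exact MTShuffle.nilR _
  | left a h ih =>
      by_cases hm : a.lifeline ∈ H
      · rwa [rmv_prepend_mem hm, rmv_prepend_mem hm]
      · rw [rmv_prepend_not hm, rmv_prepend_not hm]; exact MTShuffle.left a ih
  | right a h ih =>
      by_cases hm : a.lifeline ∈ H
      · rwa [rmv_prepend_mem hm, rmv_prepend_mem hm]
      · rw [rmv_prepend_not hm, rmv_prepend_not hm]; exact MTShuffle.right a ih

lemma head_of_rmv_prepend {H : Set Λ} {μ1 ν1' : MultiTrace Λ M} {a : Action Λ M}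
    (h1 : MultiTrace.rmv H μ1 = MultiTrace.prepend a ν1') :
    a.lifeline ∉ H ∧ μ1 a.lifeline = a :: ν1' a.lifeline := by
  have hc := congrFun h1 a.lifeline
  by_cases hm : a.lifeline ∈ H
  · simp [MultiTrace.rmv, MultiTrace.prepend, hm] at hc
  · simp [MultiTrace.rmv, MultiTrace.prepend, hm] at hc
    exact ⟨hm, hc⟩

lemma rmv_tailAt {H : Set Λ} {μ1 ν1' : MultiTrace Λ M} {a : Action Λ M}
    (h1 : MultiTrace.rmv H μ1 = MultiTrace.prepend a ν1') :
    MultiTrace.rmv H (tailAt μ1 a.lifeline) = ν1' := by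
  obtain ⟨hm, hc⟩ := head_of_rmv_prepend h1
  apply prepend_cancel (a := a)
  rw [← rmv_prepend_not hm, ← prepend_tailAt hc, h1]

lemma shuffle_lift {H : Set Λ} : ∀ {ν1 ν2 ν : MultiTrace Λ M}, MTShuffle ν1 ν2 ν →
    ∀ μ1 μ2 : MultiTrace Λ M, Built μ1 → MultiTrace.rmv H μ1 = ν1 →
    MultiTrace.rmv H μ2 = ν2 →
    ∃ μ, MTShuffle μ1 μ2 μ ∧ MultiTrace.rmv H μ = ν := by
  intro ν1 ν2 ν h
  induction h with
  | nilL ν =>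
      intro μ1 μ2 hb h1 h2
      refine ⟨MultiTrace.concat μ1 μ2, shuffle_concat hb μ2, ?_⟩
      rw [rmv_concat, h1, h2, concat_eps]
  | nilR ν =>
      intro μ1 μ2 hb h1 h2
      refine ⟨MultiTrace.concat μ1 μ2, shuffle_concat hb μ2, ?_⟩
      rw [rmv_concat, h1, h2, concat_eps']
  | left a h ih =>
      intro μ1 μ2 hb h1 h2
      obtain ⟨hm, hc⟩ := head_of_rmv_prepend h1
      have hdec := prepend_tailAt hc
      have hb' : Built (tailAt μ1 a.lifeline) := (hdec ▸ hb).of_prepend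
      obtain ⟨μ, hs, hr⟩ := ih (tailAt μ1 a.lifeline) μ2 hb' (rmv_tailAt h1) h2
      refine ⟨MultiTrace.prepend a μ, ?_, ?_⟩
      · rw [hdec]; exact MTShuffle.left a hs
      · rw [rmv_prepend_not hm, hr]
  | right a h ih =>
      intro μ1 μ2 hb h1 h2
      obtain ⟨hm, hc⟩ := head_of_rmv_prepend h2
      have hdec := prepend_tailAt hc
      obtain ⟨μ, hs, hr⟩ := ih μ1 (tailAt μ2 a.lifeline) hb h1 (rmv_tailAt h2)
      refine ⟨MultiTrace.prepend a μ, ?_, ?_⟩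
      · rw [hdec]; exact MTShuffle.right a hs
      · rw [rmv_prepend_not hm, hr]

lemma image_concatSet (H : Set Λ) (S1 S2 : Set (MultiTrace Λ M)) :
    MultiTrace.rmv H '' concatSet S1 S2
      = concatSet (MultiTrace.rmv H '' S1) (MultiTrace.rmv H '' S2) := by
  ext μ
  constructor
  · rintro ⟨ν, ⟨μ1, hμ1, μ2, hμ2, rfl⟩, rfl⟩
    exact ⟨_, ⟨μ1, hμ1, rfl⟩, _, ⟨μ2, hμ2, rfl⟩, rmv_concat H μ1 μ2⟩
  · rintro ⟨_, ⟨μ1, hμ1, rfl⟩, _, ⟨μ2, hμ2, rfl⟩, rfl⟩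
    exact ⟨MultiTrace.concat μ1 μ2, ⟨μ1, hμ1, μ2, hμ2, rfl⟩, rmv_concat H μ1 μ2⟩

lemma image_shuffleSet (H : Set Λ) {S1 : Set (MultiTrace Λ M)} (S2 : Set (MultiTrace Λ M))
    (hb : ∀ μ ∈ S1, Built μ) :
    MultiTrace.rmv H '' shuffleSet S1 S2
      = shuffleSet (MultiTrace.rmv H '' S1) (MultiTrace.rmv H '' S2) := by
  ext μ
  constructor
  · rintro ⟨ν, ⟨μ1, hμ1, μ2, hμ2, hs⟩, rfl⟩
    exact ⟨_, ⟨μ1, hμ1, rfl⟩, _, ⟨μ2, hμ2, rfl⟩, rmv_shuffle hs⟩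
  · rintro ⟨_, ⟨μ1, hμ1, rfl⟩, _, ⟨μ2, hμ2, rfl⟩, hs⟩
    obtain ⟨ν, hsh, hr⟩ := shuffle_lift hs μ1 μ2 (hb μ1 hμ1) rfl rfl
    exact ⟨ν, ⟨μ1, hμ1, μ2, hμ2, hsh⟩, hr⟩

lemma image_powConcat (H : Set Λ) (S : Set (MultiTrace Λ M)) (n : ℕ) :
    MultiTrace.rmv H '' powConcat S n = powConcat (MultiTrace.rmv H '' S) n := by
  induction n with
  | zero => simp [powConcat, rmv_eps]
  | succ n ih => rw [powConcat, powConcat, image_concatSet, ih]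

lemma image_kleeneConcat (H : Set Λ) (S : Set (MultiTrace Λ M)) :
    MultiTrace.rmv H '' kleeneConcat S = kleeneConcat (MultiTrace.rmv H '' S) := by
  rw [kleeneConcat, kleeneConcat, Set.image_iUnion]
  exact iSup_congr (image_powConcat H S)

lemma built_powShuffle {S : Set (MultiTrace Λ M)} (hb : ∀ μ ∈ S, Built μ) (n : ℕ) :
    ∀ μ ∈ powShuffle S n, Built μ := by
  induction n with
  | zero => intro μ hμ; rw [powShuffle] at hμ; simp at hμ; exact hμ ▸ Built.eps
  | succ n ih =>
      rintro μ ⟨μ1, hμ1, μ2, hμ2, hs⟩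
      exact Built.shuffle hs (hb μ1 hμ1) (ih μ2 hμ2)

lemma image_powShuffle (H : Set Λ) {S : Set (MultiTrace Λ M)}
    (hb : ∀ μ ∈ S, Built μ) (n : ℕ) :
    MultiTrace.rmv H '' powShuffle S n = powShuffle (MultiTrace.rmv H '' S) n := by
  induction n with
  | zero => simp [powShuffle, rmv_eps]
  | succ n ih => rw [powShuffle, powShuffle, image_shuffleSet H _ hb, ih]

lemma image_kleeneShuffle (H : Set Λ) {S : Set (MultiTrace Λ M)}
    (hb : ∀ μ ∈ S, Built μ) :
    MultiTrace.rmv H '' kleeneShuffle S = kleeneShuffle (MultiTrace.rmv H '' S) := by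
  rw [kleeneShuffle, kleeneShuffle, Set.image_iUnion]
  exact iSup_congr (image_powShuffle H hb)

lemma built_powConcat {S : Set (MultiTrace Λ M)} (hb : ∀ μ ∈ S, Built μ) (n : ℕ) :
    ∀ μ ∈ powConcat S n, Built μ := by
  induction n with
  | zero => intro μ hμ; rw [powConcat] at hμ; simp at hμ; exact hμ ▸ Built.eps
  | succ n ih =>
      rintro μ ⟨μ1, hμ1, μ2, hμ2, rfl⟩
      exact (hb μ1 hμ1).concat (ih μ2 hμ2)

lemma sem_built (i : Interaction Λ M) : ∀ μ ∈ sem i, Built μ := by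
  induction i with
  | empty => intro μ hμ; rw [sem] at hμ; simp at hμ; exact hμ ▸ Built.eps
  | act a =>
      intro μ hμ; rw [sem] at hμ; simp at hμ
      exact hμ ▸ Built.prepend a Built.eps
  | loopS i ih =>
      intro μ hμ; rw [sem] at hμ
      obtain ⟨_, ⟨n, rfl⟩, hμ⟩ := hμ
      exact built_powConcat ih n μ hμ
  | loopW i ih =>
      intro μ hμ; rw [sem] at hμ
      obtain ⟨_, ⟨n, rfl⟩, hμ⟩ := hμ
      exact built_powConcat ih n μ hμ
  | loopP i ih =>
      intro μ hμ; rw [sem] at hμ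
      obtain ⟨_, ⟨n, rfl⟩, hμ⟩ := hμ
      exact built_powShuffle ih n μ hμ
  | strict i1 i2 ih1 ih2 =>
      rintro μ ⟨μ1, hμ1, μ2, hμ2, rfl⟩
      exact (ih1 μ1 hμ1).concat (ih2 μ2 hμ2)
  | seq i1 i2 ih1 ih2 =>
      rintro μ ⟨μ1, hμ1, μ2, hμ2, rfl⟩
      exact (ih1 μ1 hμ1).concat (ih2 μ2 hμ2)
  | par i1 i2 ih1 ih2 =>
      rintro μ ⟨μ1, hμ1, μ2, hμ2, hs⟩
      exact Built.shuffle hs (ih1 μ1 hμ1) (ih2 μ2 hμ2)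
  | alt i1 i2 ih1 ih2 =>
      intro μ hμ
      rw [sem] at hμ
      rcases hμ with h | h
      · exact ih1 μ h
      · exact ih2 μ h

end Aux

theorem statement5' {Λ M : Type} (H : Set Λ)
    (i : Interaction Λ M) :
    sem (rmv H i) = MultiTrace.rmv H '' sem i := by
  induction i with
  | empty => simp [rmv, sem, rmv_eps]
  | act a =>
      by_cases hm : a.lifeline ∈ H
      · simp [rmv, hm, sem, rmv_prepend_mem hm, rmv_eps]
      · simp [rmv, hm, sem, rmv_prepend_not hm, rmv_eps]
  | loopS i ih => rw [rmv, sem, sem, ih, image_kleeneConcat]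
  | loopW i ih => rw [rmv, sem, sem, ih, image_kleeneConcat]
  | loopP i ih => rw [rmv, sem, sem, ih, image_kleeneShuffle H (sem_built i)]
  | strict i1 i2 ih1 ih2 => rw [rmv, sem, sem, ih1, ih2, image_concatSet]
  | seq i1 i2 ih1 ih2 => rw [rmv, sem, sem, ih1, ih2, image_concatSet]
  | par i1 i2 ih1 ih2 => rw [rmv, sem, sem, ih1, ih2, image_shuffleSet H _ (sem_built i1)]
  | alt i1 i2 ih1 ih2 => rw [rmv, sem, sem, ih1, ih2, Set.image_union]


end RV

namespace RV

/-- the multi-trace semantics commutes with lifeline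
removal : `σ_{L∖H}(rmv_H(i)) = rmv_H(σ_L(i))`. -/
theorem statement5 {Λ M : Type} (L H : Set Λ) (hH : H ⊆ L)
    (i : Interaction Λ M) (hi : i.lifelinesIn L) :
    sem (rmv H i) = MultiTrace.rmv H '' sem i := by
  exact statement5' H i

end RV
end

section
/- The execution relation is deterministic at each position: for any interactions i and i' in 𝕀(L), any action a, and any position p, if i →[a@p] i' then a = i(p), and i' is the unique interaction i'' such that i →[a@p] i''. -/
open scoped Classical

namespace RV

variable {Λ M : Type}

namespace MultiTrace

/-- `μ ∈ 𝕄(L)` : components vanish outside `L` and every action of the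
component on `l` occurs on `l`. -/
def isOver (L : Set Λ) (μ : MultiTrace Λ M) : Prop :=
  (∀ l ∉ L, μ l = []) ∧ ∀ l, ∀ a ∈ μ l, a.lifeline = l

end MultiTrace

end RV

namespace RV

theorem prunes_not_collides {Λ M : Type} {i i' : Interaction Λ M} {l : Λ}
    (hp : Prunes i l i') (hc : Collides i l) : False := by
  induction hp with
  | empty => cases hc
  | act h => cases hc with | act h2 => exact h h2
  | strict h1 h2 ih1 ih2 =>
    cases hc with
    | strictL h => exact ih1 h
    | strictR h => exact ih2 h
  | seq h1 h2 ih1 ih2 =>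
    cases hc with
    | seqL h => exact ih1 h
    | seqR h => exact ih2 h
  | par h1 h2 ih1 ih2 =>
    cases hc with
    | parL h => exact ih1 h
    | parR h => exact ih2 h
  | altBoth h1 h2 ih1 ih2 => cases hc with | alt hc1 _ => exact ih1 hc1
  | altL h1 h2 ih1 => cases hc with | alt hc1 _ => exact ih1 hc1
  | altR h1 h2 ih1 => cases hc with | alt _ hc2 => exact ih1 hc2
  | loopS _ _ => cases hc
  | loopW _ _ => cases hc
  | loopP _ _ => cases hc
  | loopSElim _ => cases hc
  | loopWElim _ => cases hc
  | loopPElim _ => cases hc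

theorem prunes_det {Λ M : Type} {i i1 i2 : Interaction Λ M} {l : Λ}
    (h1 : Prunes i l i1) (h2 : Prunes i l i2) : i1 = i2 := by
  induction h1 generalizing i2 with
  | empty => cases h2; rfl
  | act _ => cases h2; rfl
  | strict _ _ ih1 ih2 =>
    cases h2 with | strict ha hb => rw [ih1 ha, ih2 hb]
  | seq _ _ ih1 ih2 =>
    cases h2 with | seq ha hb => rw [ih1 ha, ih2 hb]
  | par _ _ ih1 ih2 =>
    cases h2 with | par ha hb => rw [ih1 ha, ih2 hb]
  | altBoth hp1 hp2 ih1 ih2 =>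
    cases h2 with
    | altBoth ha hb => rw [ih1 ha, ih2 hb]
    | altL _ hc => exact absurd hc (prunes_not_collides hp2 · )
    | altR _ hc => exact absurd hc (prunes_not_collides hp1 · )
  | altL hp1 hc2 ih1 =>
    cases h2 with
    | altBoth _ hb => exact absurd hc2 (prunes_not_collides hb ·)
    | altL ha _ => exact ih1 ha
    | altR _ hc => exact absurd hc (prunes_not_collides hp1 ·)
  | altR hp2 hc1 ih1 =>
    cases h2 with
    | altBoth ha _ => exact absurd hc1 (prunes_not_collides ha ·)
    | altL ha hc => exact absurd hc (prunes_not_collides hp2 ·)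
    | altR ha _ => exact ih1 ha
  | loopS hp ih =>
    cases h2 with
    | loopS ha => rw [ih ha]
    | loopSElim hc => exact absurd hc (prunes_not_collides hp ·)
  | loopW hp ih =>
    cases h2 with
    | loopW ha => rw [ih ha]
    | loopWElim hc => exact absurd hc (prunes_not_collides hp ·)
  | loopP hp ih =>
    cases h2 with
    | loopP ha => rw [ih ha]
    | loopPElim hc => exact absurd hc (prunes_not_collides hp ·)
  | loopSElim hc =>
    cases h2 with
    | loopS ha => exact absurd hc (prunes_not_collides ha ·)
    | loopSElim _ => rfl
  | loopWElim hc =>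
    cases h2 with
    | loopW ha => exact absurd hc (prunes_not_collides ha ·)
    | loopWElim _ => rfl
  | loopPElim hc =>
    cases h2 with
    | loopP ha => exact absurd hc (prunes_not_collides ha ·)
    | loopPElim _ => rfl

theorem executes_subterm_det {Λ M : Type} {i i' : Interaction Λ M}
    {a : Action Λ M} {p : List Bool} (h : Executes i a p i') :
    subtermAt i p = some (.act a) ∧
    ∀ i'' : Interaction Λ M, Executes i a p i'' → i'' = i' := by
  induction h with
  | act a =>
    refine ⟨rfl, fun i'' h'' => ?_⟩; cases h''; rfl
  | altL i2 hx ih =>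
    refine ⟨ih.1, fun i'' h'' => ?_⟩
    cases h'' with | altL _ hb => exact ih.2 _ hb
  | altR i1 hx ih =>
    refine ⟨ih.1, fun i'' h'' => ?_⟩
    cases h'' with | altR _ hb => exact ih.2 _ hb
  | parL i2 hx ih =>
    refine ⟨ih.1, fun i'' h'' => ?_⟩
    cases h'' with | parL _ hb => rw [ih.2 _ hb]
  | parR i1 hx ih =>
    refine ⟨ih.1, fun i'' h'' => ?_⟩
    cases h'' with | parR _ hb => rw [ih.2 _ hb]
  | strictL i2 hx ih =>
    refine ⟨ih.1, fun i'' h'' => ?_⟩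
    cases h'' with | strictL _ hb => rw [ih.2 _ hb]
  | strictR ht hx ih =>
    refine ⟨ih.1, fun i'' h'' => ?_⟩
    cases h'' with | strictR _ hb => exact ih.2 _ hb
  | seqL i2 hx ih =>
    refine ⟨ih.1, fun i'' h'' => ?_⟩
    cases h'' with | seqL _ hb => rw [ih.2 _ hb]
  | seqR hp hx ih =>
    refine ⟨ih.1, fun i'' h'' => ?_⟩
    cases h'' with | seqR hpa hb => rw [ih.2 _ hb, prunes_det hpa hp]
  | loopS hx ih =>
    refine ⟨ih.1, fun i'' h'' => ?_⟩
    cases h'' with | loopS hb => rw [ih.2 _ hb]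
  | loopW hx hp ih =>
    refine ⟨ih.1, fun i'' h'' => ?_⟩
    cases h'' with | loopW hb hpa => rw [ih.2 _ hb, prunes_det hpa hp]
  | loopP hx ih =>
    refine ⟨ih.1, fun i'' h'' => ?_⟩
    cases h'' with | loopP hb => rw [ih.2 _ hb]

/-- the execution relation is deterministic at each
position : if `i →[a@p] i'` then `a = i(p)` (the symbol of `i` at position
`p` is the action `a`) and `i'` is the unique interaction `i''` with
`i →[a@p] i''`. -/
theorem statement6 {Λ M : Type} (L : Set Λ) (i i' : Interaction Λ M)
    (hi : i.lifelinesIn L) (hi' : i'.lifelinesIn L)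
    (a : Action Λ M) (p : List Bool) (h : Executes i a p i') :
    subtermAt i p = some (.act a) ∧
    ∀ i'' : Interaction Λ M, Executes i a p i'' → i'' = i' := by
  exact executes_subterm_det h

end RV
end

section
/- For any proper subset L of the universe ℒ of lifelines, any interaction i ∈ 𝕀(L), any set of lifelines H ⊊ L, any action a ∈ 𝔸(L) with θ(a) ∉ H, and any position p ∈ pos(i): if there exists i' ∈ 𝕀(L) with i →[a@p] i', then rmv_H(i) →[a@p] rmv_H(i'). -/
open scoped Classical

namespace RV

lemma rmv_terminates {Λ M : Type} (H : Set Λ) {i : Interaction Λ M}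
    (h : Terminates i) : Terminates (rmv H i) := by
  induction h with
  | empty => exact .empty
  | altL _ ih => exact .altL ih
  | altR _ ih => exact .altR ih
  | strict _ _ ih1 ih2 => exact .strict ih1 ih2
  | seq _ _ ih1 ih2 => exact .seq ih1 ih2
  | par _ _ ih1 ih2 => exact .par ih1 ih2
  | loopS i => exact .loopS _
  | loopW i => exact .loopW _
  | loopP i => exact .loopP _

lemma rmv_collides {Λ M : Type} (H : Set Λ) {i : Interaction Λ M} {l : Λ}
    (hl : l ∉ H) (h : Collides i l) : Collides (rmv H i) l := by
  induction h with
  | @act a _ ha =>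
    simp only [rmv]
    rw [if_neg (by rw [ha]; exact hl)]
    exact .act ha
  | alt _ _ ih1 ih2 => exact .alt (ih1 hl) (ih2 hl)
  | strictL _ ih => exact .strictL (ih hl)
  | strictR _ ih => exact .strictR (ih hl)
  | seqL _ ih => exact .seqL (ih hl)
  | seqR _ ih => exact .seqR (ih hl)
  | parL _ ih => exact .parL (ih hl)
  | parR _ ih => exact .parR (ih hl)

lemma rmv_prunes {Λ M : Type} (H : Set Λ) {i i' : Interaction Λ M} {l : Λ}
    (hl : l ∉ H) (h : Prunes i l i') : Prunes (rmv H i) l (rmv H i') := by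
  induction h with
  | empty => exact .empty _
  | @act a _ ha =>
    simp only [rmv]
    by_cases hmem : a.lifeline ∈ H
    · rw [if_pos hmem]; exact .empty _
    · rw [if_neg hmem]; exact .act ha
  | strict _ _ ih1 ih2 => exact .strict (ih1 hl) (ih2 hl)
  | seq _ _ ih1 ih2 => exact .seq (ih1 hl) (ih2 hl)
  | par _ _ ih1 ih2 => exact .par (ih1 hl) (ih2 hl)
  | altBoth _ _ ih1 ih2 => exact .altBoth (ih1 hl) (ih2 hl)
  | altL _ hc ih => exact .altL (ih hl) (rmv_collides H hl hc)
  | altR _ hc ih => exact .altR (ih hl) (rmv_collides H hl hc)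
  | loopS _ ih => exact .loopS (ih hl)
  | loopW _ ih => exact .loopW (ih hl)
  | loopP _ ih => exact .loopP (ih hl)
  | loopSElim hc => exact .loopSElim (rmv_collides H hl hc)
  | loopWElim hc => exact .loopWElim (rmv_collides H hl hc)
  | loopPElim hc => exact .loopPElim (rmv_collides H hl hc)

lemma rmv_executes {Λ M : Type} (H : Set Λ) {i i' : Interaction Λ M}
    {a : Action Λ M} {p : List Bool} (haH : a.lifeline ∉ H)
    (h : Executes i a p i') : Executes (rmv H i) a p (rmv H i') := by
  induction h with
  | act a =>
    simp only [rmv]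
    rw [if_neg haH]
    exact .act a
  | altL _ _ ih => exact .altL _ (ih haH)
  | altR _ _ ih => exact .altR _ (ih haH)
  | parL _ _ ih => exact .parL _ (ih haH)
  | parR _ _ ih => exact .parR _ (ih haH)
  | strictL _ _ ih => exact .strictL _ (ih haH)
  | strictR ht _ ih => exact .strictR (rmv_terminates H ht) (ih haH)
  | seqL _ _ ih => exact .seqL _ (ih haH)
  | seqR hpr _ ih => exact .seqR (rmv_prunes H haH hpr) (ih haH)
  | loopS _ ih => exact .loopS (ih haH)
  | loopW _ hpr ih => exact .loopW (ih haH) (rmv_prunes H haH hpr)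
  | loopP _ ih => exact .loopP (ih haH)

/-- execution is preserved by lifeline removal provided the
lifeline of the executed action is not removed : for `L ⊊ ℒ`, `i ∈ 𝕀(L)`,
`H ⊊ L`, `a ∈ 𝔸(L)` with `θ(a) ∉ H` and `p ∈ pos(i)`, if `i →[a@p] i'`
then `rmv_H(i) →[a@p] rmv_H(i')`. -/
theorem statement8 {Λ M : Type} (L : Set Λ) (hL : L ⊂ Set.univ)
    (i : Interaction Λ M) (hi : i.lifelinesIn L)
    (H : Set Λ) (hH : H ⊂ L)
    (a : Action Λ M) (haL : a.lifeline ∈ L) (haH : a.lifeline ∉ H)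
    (p : List Bool) (hp : (subtermAt i p).isSome) :
    ∀ i' : Interaction Λ M, Executes i a p i' →
      Executes (rmv H i) a p (rmv H i') := by
  exact fun i' h => rmv_executes H haH h

end RV
end

section
/- For every set of lifelines L ⊆ ℒ and every global trace t ∈ 𝔸(L)*, the projections of the prefixes of t are multi-prefixes of the projection of t: π_L(t̄) ⊆ \overline{π_L(t)}. Moreover this inclusion is strict in general: there exist L ⊆ ℒ and t ∈ 𝔸(L)* such that \overline{π_L(t)} is not contained in π_L(t̄) (for instance L = {l1,l2} and t = l1!m . l2?m). -/
open scoped Classical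

namespace RV

theorem proj_append {Λ M : Type} (u v : List (Action Λ M)) (l : Λ) :
    proj (u ++ v) l = proj u l ++ proj v l := by
  induction u with
  | nil => simp [proj, MultiTrace.eps]
  | cons a u ih =>
    simp only [List.cons_append, proj, MultiTrace.prepend]
    split <;> simp [ih]

/-- the projections of the prefixes of a global trace `t`
are multi-prefixes of the projection of `t` : `π_L(t̄) ⊆ \overline{π_L(t)}`;
moreover the inclusion is strict in general : there exist `L` and `t`
(e.g. `L = {l1,l2}` and `t = l1!m.l2?m`) such that `\overline{π_L(t)}` is
not contained in `π_L(t̄)`. -/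
theorem statement9 :
    (∀ (Λ M : Type) (L : Set Λ) (t : List (Action Λ M)),
      (∀ a ∈ t, a.lifeline ∈ L) →
      proj '' {t' | t' <+: t} ⊆ {μ' | MultiTrace.isPrefixOf μ' (proj t)}) ∧
    (∃ (L : Set Bool) (t : List (Action Bool Unit)),
      (∀ a ∈ t, a.lifeline ∈ L) ∧
      ¬ ({μ' | MultiTrace.isPrefixOf μ' (proj t)} ⊆ proj '' {t' | t' <+: t})) := by
  constructor
  · rintro Λ M L t _ μ ⟨t', ht', rfl⟩ l
    obtain ⟨s, rfl⟩ := ht'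
    exact ⟨proj s l, (proj_append t' s l).symm⟩
  · refine ⟨Set.univ, [⟨false, true, ()⟩, ⟨true, false, ()⟩], fun a _ => trivial, ?_⟩
    intro h
    have hμ : MultiTrace.isPrefixOf (fun l => if l = true then [⟨true, false, ()⟩] else [])
        (proj [⟨false, true, ()⟩, ⟨true, false, ()⟩]) := by
      intro l
      cases l <;> simp [proj, MultiTrace.prepend, MultiTrace.eps]
    obtain ⟨t', ht', heq⟩ := h hμ
    have htrue := congrFun heq true
    have hfalse := congrFun heq false
    obtain ⟨s, hs⟩ := ht'
    match t', s, hs with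
    | [], _, _ =>
      simp [proj, MultiTrace.eps] at htrue
    | [a], s, hs =>
      simp at hs
      obtain ⟨rfl, -⟩ := hs
      simp [proj, MultiTrace.prepend, MultiTrace.eps] at htrue
    | [a, b], s, hs =>
      simp at hs
      obtain ⟨rfl, rfl, -⟩ := hs
      simp [proj, MultiTrace.prepend, MultiTrace.eps] at hfalse
    | a :: b :: c :: t', s, hs =>
      simp at hs

end RV
end

section
/- For any set of lifelines L ⊆ ℒ, any multi-trace μ ∈ 𝕄(L), and any interaction i ∈ 𝕀(L), the set of vertices reachable from (i,μ) in the analysis graph, { v ∈ 𝕍 | (i,μ) ⤳* v }, is finite. -/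
open scoped Classical

namespace RV

variable {Λ M : Type}

lemma not_step_ok {w : Vertex Λ M} : ¬ Step Vertex.ok w := by
  rintro (h | h | h) <;> cases h

lemma prunes_finite (i : Interaction Λ M) (l : Λ) :
    {i' : Interaction Λ M | Prunes i l i'}.Finite := by
  induction i with
  | empty => exact (Set.finite_singleton .empty).subset (by rintro x hx; cases hx; rfl)
  | act a => exact (Set.finite_singleton (.act a)).subset (by rintro x hx; cases hx; rfl)
  | loopS i ih =>
      refine ((ih.image Interaction.loopS).insert .empty).subset ?_
      rintro x hx; cases hx with
      | loopS h => exact Set.mem_insert_of_mem _ ⟨_, h, rfl⟩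
      | loopSElim h => exact Set.mem_insert _ _
  | loopW i ih =>
      refine ((ih.image Interaction.loopW).insert .empty).subset ?_
      rintro x hx; cases hx with
      | loopW h => exact Set.mem_insert_of_mem _ ⟨_, h, rfl⟩
      | loopWElim h => exact Set.mem_insert _ _
  | loopP i ih =>
      refine ((ih.image Interaction.loopP).insert .empty).subset ?_
      rintro x hx; cases hx with
      | loopP h => exact Set.mem_insert_of_mem _ ⟨_, h, rfl⟩
      | loopPElim h => exact Set.mem_insert _ _
  | strict i1 i2 ih1 ih2 =>
      refine (Set.Finite.image2 Interaction.strict ih1 ih2).subset ?_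
      rintro x hx; cases hx with
      | strict h1 h2 => exact Set.mem_image2_of_mem h1 h2
  | seq i1 i2 ih1 ih2 =>
      refine (Set.Finite.image2 Interaction.seq ih1 ih2).subset ?_
      rintro x hx; cases hx with
      | seq h1 h2 => exact Set.mem_image2_of_mem h1 h2
  | par i1 i2 ih1 ih2 =>
      refine (Set.Finite.image2 Interaction.par ih1 ih2).subset ?_
      rintro x hx; cases hx with
      | par h1 h2 => exact Set.mem_image2_of_mem h1 h2
  | alt i1 i2 ih1 ih2 =>
      refine (((Set.Finite.image2 Interaction.alt ih1 ih2).union ih1).union ih2).subset ?_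
      rintro x hx; cases hx with
      | altBoth h1 h2 => exact Or.inl (Or.inl (Set.mem_image2_of_mem h1 h2))
      | altL h1 h2 => exact Or.inl (Or.inr h1)
      | altR h2 h1 => exact Or.inr h2

lemma executes_finite (i : Interaction Λ M) (a : Action Λ M) :
    {i' : Interaction Λ M | ∃ p, Executes i a p i'}.Finite := by
  induction i with
  | empty => exact Set.finite_empty.subset (by rintro x ⟨p, hx⟩; cases hx)
  | act b =>
      refine (Set.finite_singleton .empty).subset ?_
      rintro x ⟨p, hx⟩; cases hx; rfl
  | loopS i ih =>
      refine (ih.image (fun j => .strict j (.loopS i))).subset ?_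
      rintro x ⟨p, hx⟩; cases hx with
      | loopS h => exact ⟨_, ⟨_, h⟩, rfl⟩
  | loopW i ih =>
      refine (Set.Finite.image2 (fun i'' j => Interaction.seq i'' (.seq j (.loopW i)))
        (prunes_finite (.loopW i) a.lifeline) ih).subset ?_
      rintro x ⟨p, hx⟩; cases hx with
      | loopW h hp => exact Set.mem_image2_of_mem hp ⟨_, h⟩
  | loopP i ih =>
      refine (ih.image (fun j => .par j (.loopP i))).subset ?_
      rintro x ⟨p, hx⟩; cases hx with
      | loopP h => exact ⟨_, ⟨_, h⟩, rfl⟩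
  | strict i1 i2 ih1 ih2 =>
      refine ((ih1.image (fun j => .strict j i2)).union ih2).subset ?_
      rintro x ⟨p, hx⟩; cases hx with
      | strictL _ h => exact Or.inl ⟨_, ⟨_, h⟩, rfl⟩
      | strictR _ h => exact Or.inr ⟨_, h⟩
  | seq i1 i2 ih1 ih2 =>
      refine ((ih1.image (fun j => .seq j i2)).union
        (Set.Finite.image2 Interaction.seq (prunes_finite i1 a.lifeline) ih2)).subset ?_
      rintro x ⟨p, hx⟩; cases hx with
      | seqL _ h => exact Or.inl ⟨_, ⟨_, h⟩, rfl⟩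
      | seqR hp h => exact Or.inr (Set.mem_image2_of_mem hp ⟨_, h⟩)
  | par i1 i2 ih1 ih2 =>
      refine ((ih1.image (fun j => .par j i2)).union (ih2.image (fun j => .par i1 j))).subset ?_
      rintro x ⟨p, hx⟩; cases hx with
      | parL _ h => exact Or.inl ⟨_, ⟨_, h⟩, rfl⟩
      | parR _ h => exact Or.inr ⟨_, ⟨_, h⟩, rfl⟩
  | alt i1 i2 ih1 ih2 =>
      refine (ih1.union ih2).subset ?_
      rintro x ⟨p, hx⟩; cases hx with
      | altL _ h => exact Or.inl ⟨_, h⟩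
      | altR _ h => exact Or.inr ⟨_, h⟩

lemma prunes_lifelines {L : Set Λ} {i i' : Interaction Λ M} {l : Λ}
    (h : Prunes i l i') (hi : i.lifelinesIn L) : i'.lifelinesIn L := by
  induction h <;> simp_all [Interaction.lifelinesIn]

lemma executes_lifelines {L : Set Λ} {i i' : Interaction Λ M} {a : Action Λ M} {p : List Bool}
    (h : Executes i a p i') (hi : i.lifelinesIn L) : i'.lifelinesIn L := by
  induction h with
  | act => trivial
  | altL _ _ ih => exact ih hi.1
  | altR _ _ ih => exact ih hi.2
  | parL _ _ ih => exact ⟨ih hi.1, hi.2⟩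
  | parR _ _ ih => exact ⟨hi.1, ih hi.2⟩
  | strictL _ _ ih => exact ⟨ih hi.1, hi.2⟩
  | strictR _ _ ih => exact ih hi.2
  | seqL _ _ ih => exact ⟨ih hi.1, hi.2⟩
  | seqR hp _ ih => exact ⟨prunes_lifelines hp hi.1, ih hi.2⟩
  | loopS _ ih => exact ⟨ih hi, hi⟩
  | loopW _ hp ih => exact ⟨prunes_lifelines hp hi, ih hi, hi⟩
  | loopP _ ih => exact ⟨ih hi, hi⟩

lemma rmv_lifelines {L : Set Λ} (H : Set Λ) {i : Interaction Λ M}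
    (hi : i.lifelinesIn L) : (rmv H i).lifelinesIn (L \ H) := by
  induction i with
  | empty => trivial
  | act a =>
      by_cases h : a.lifeline ∈ H <;> simp [rmv, h, Interaction.lifelinesIn]
      exact hi
  | loopS i ih => exact ih hi
  | loopW i ih => exact ih hi
  | loopP i ih => exact ih hi
  | strict i1 i2 ih1 ih2 => exact ⟨ih1 hi.1, ih2 hi.2⟩
  | seq i1 i2 ih1 ih2 => exact ⟨ih1 hi.1, ih2 hi.2⟩
  | par i1 i2 ih1 ih2 => exact ⟨ih1 hi.1, ih2 hi.2⟩
  | alt i1 i2 ih1 ih2 => exact ⟨ih1 hi.1, ih2 hi.2⟩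

lemma step_cases {L : Set Λ} {i : Interaction Λ M} {μ : MultiTrace Λ M} {w : Vertex Λ M}
    (h : Step (Vertex.node L i μ) w) :
    w = Vertex.ok ∨
    (∃ H : Set Λ, H.Nonempty ∧ H ⊂ L ∧ (∀ l ∈ H, μ l = []) ∧
      w = Vertex.node (L \ H) (rmv H i) (MultiTrace.rmv H μ)) ∨
    (∃ (a : Action Λ M) (μ' : MultiTrace Λ M), a.lifeline ∈ L ∧
      μ = MultiTrace.prepend a μ' ∧
      ∃ (p : List Bool) (i' : Interaction Λ M), Executes i a p i' ∧
        w = Vertex.node L i' μ') := by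
  rcases h with h | h | h
  · cases h; exact Or.inl rfl
  · cases h with
    | mk L H i μ hne hsub hemp => exact Or.inr (Or.inl ⟨H, hne, hsub, hemp, rfl⟩)
  · cases h with
    | mk L i i' a p μ hal hex => exact Or.inr (Or.inr ⟨a, μ, hal, rfl, p, i', hex, rfl⟩)

lemma reach_ok_finite :
    {v : Vertex Λ M | Relation.ReflTransGen Step Vertex.ok v}.Finite := by
  refine (Set.finite_singleton Vertex.ok).subset ?_
  intro w hw
  induction hw with
  | refl => rfl
  | tail h1 h2 ih => exact absurd (ih ▸ h2) not_step_ok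

/-- the set of vertices reachable from `(i,μ)` in the
analysis graph is finite. -/
theorem statement14 {Λ M : Type} (L : Set Λ) (hLfin : L.Finite)
    (i : Interaction Λ M) (μ : MultiTrace Λ M)
    (hi : i.lifelinesIn L) (hμ : MultiTrace.over' L μ) :
    {v : Vertex Λ M | Relation.ReflTransGen Step (Vertex.node L i μ) v}.Finite := by
  have main : ∀ n : ℕ, ∀ (L : Set Λ) (hLfin : L.Finite) (i : Interaction Λ M)
      (μ : MultiTrace Λ M), i.lifelinesIn L → MultiTrace.over' L μ →
      hLfin.toFinset.card + ∑ l ∈ hLfin.toFinset, (μ l).length ≤ n →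
      {v : Vertex Λ M | Relation.ReflTransGen Step (Vertex.node L i μ) v}.Finite := by
    intro n
    induction n using Nat.strong_induction_on with
    | _ n IH =>
    intro L hLfin i μ hi hμ hn
    -- the successor set
    set S : Set (Vertex Λ M) := {w | Step (Vertex.node L i μ) w} with hSdef
    -- possible actions at the head of a component
    set A : Set (Action Λ M) := ⋃ l ∈ L, {a : Action Λ M | ∃ t, μ l = a :: t} with hAdef
    have hA : A.Finite := by
      refine hLfin.biUnion (fun l _ => ?_)
      refine Set.Subsingleton.finite ?_
      rintro a ⟨t, ht⟩ a' ⟨t', ht'⟩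
      rw [ht] at ht'; exact (List.cons.injEq _ _ _ _ ▸ ht').1
    -- the tail multitrace after consuming a
    set τ : Action Λ M → MultiTrace Λ M :=
      fun a l => if l = a.lifeline then (μ l).tail else μ l with hτdef
    have hS : S.Finite := by
      refine Set.Finite.subset (s := {Vertex.ok} ∪
        ((fun H => Vertex.node (L \ H) (rmv H i) (MultiTrace.rmv H μ)) '' {H | H ⊆ L}) ∪
        ⋃ a ∈ A, (fun i' => Vertex.node L i' (τ a)) ''
          {i' | ∃ p, Executes i a p i'}) ?_ ?_
      · exact ((Set.finite_singleton _).union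
          (hLfin.finite_subsets.image _)).union
          (hA.biUnion (fun a _ => (executes_finite i a).image _))
      · intro w hw
        rcases step_cases hw with rfl | ⟨H, hne, hsub, hemp, rfl⟩ |
          ⟨a, μ', hal, hμeq, p, i', hex, rfl⟩
        · exact Or.inl (Or.inl rfl)
        · exact Or.inl (Or.inr ⟨H, hsub.subset, rfl⟩)
        · refine Or.inr ?_
          have hμ'a : μ a.lifeline = a :: μ' a.lifeline := by
            rw [hμeq]; simp [MultiTrace.prepend]
          have hτa : τ a = μ' := by
            funext l
            by_cases hl : l = a.lifeline
            · subst hl; simp [hτdef, hμ'a]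
            · simp [hτdef, hl, hμeq, MultiTrace.prepend, hl]
          refine Set.mem_biUnion (show a ∈ A from ?_) ⟨i', ⟨p, hex⟩, by rw [hτa]⟩
          rw [hAdef]
          exact Set.mem_biUnion hal ⟨μ' a.lifeline, hμ'a⟩
    have hreach : ∀ w ∈ S, {v : Vertex Λ M | Relation.ReflTransGen Step w v}.Finite := by
      intro w hw
      rcases step_cases hw with rfl | ⟨H, hne, hsub, hemp, rfl⟩ |
        ⟨a, μ', hal, hμeq, p, i', hex, rfl⟩
      · exact reach_ok_finite
      · -- removal case: card decreases
        have hLfin' : (L \ H).Finite := hLfin.diff (t := H)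
        have hcard : hLfin'.toFinset.card < hLfin.toFinset.card := by
          refine Finset.card_lt_card ?_
          rw [Set.Finite.toFinset_ssubset_toFinset]
          constructor
          · exact Set.diff_subset
          · intro hsb
            obtain ⟨l, hl⟩ := hne
            exact (hsb (hsub.subset hl)).2 hl
        have hsum : ∑ l ∈ hLfin'.toFinset, (MultiTrace.rmv H μ l).length ≤
            ∑ l ∈ hLfin.toFinset, (μ l).length := by
          calc ∑ l ∈ hLfin'.toFinset, (MultiTrace.rmv H μ l).length
              = ∑ l ∈ hLfin'.toFinset, (μ l).length := by
                refine Finset.sum_congr rfl (fun l hl => ?_)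
                rw [Set.Finite.mem_toFinset] at hl
                simp [MultiTrace.rmv, hl.2]
            _ ≤ ∑ l ∈ hLfin.toFinset, (μ l).length := by
                refine Finset.sum_le_sum_of_subset ?_
                rw [Set.Finite.toFinset_subset_toFinset]
                exact Set.diff_subset
        refine IH (hLfin'.toFinset.card + ∑ l ∈ hLfin'.toFinset,
            (MultiTrace.rmv H μ l).length) ?_ _ hLfin' _ _
            (rmv_lifelines H hi) ?_ le_rfl
        · exact lt_of_lt_of_le (by omega) hn
        · constructor
          · intro l hl
            by_cases h' : l ∈ H
            · simp [MultiTrace.rmv, h']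
            · have : l ∉ L := fun hL => hl ⟨hL, h'⟩
              simp [MultiTrace.rmv, h', hμ.1 l this]
          · intro l a' ha'
            by_cases h' : l ∈ H
            · simp [MultiTrace.rmv, h'] at ha'
            · simp [MultiTrace.rmv, h'] at ha'
              exact hμ.2 l a' ha'
      · -- execution case: total length decreases
        have hsum : ∑ l ∈ hLfin.toFinset, (μ l).length =
            (∑ l ∈ hLfin.toFinset, (μ' l).length) + 1 := by
          have h1 : ∀ l, (μ l).length =
              (μ' l).length + (if l = a.lifeline then 1 else 0) := by
            intro l
            rw [hμeq]
            by_cases hl : l = a.lifeline <;> simp [MultiTrace.prepend, hl]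
          rw [Finset.sum_congr rfl (fun l _ => h1 l), Finset.sum_add_distrib]
          congr 1
          rw [Finset.sum_ite_eq' hLfin.toFinset a.lifeline (fun _ => 1)]
          simp [hal]
        have hμ' : MultiTrace.over' L μ' := by
          constructor
          · intro l hl
            have hne : l ≠ a.lifeline := fun e => hl (e ▸ hal)
            have := hμ.1 l hl
            rw [hμeq] at this
            simpa [MultiTrace.prepend, hne] using this
          · intro l a' ha'
            refine hμ.2 l a' ?_
            rw [hμeq]
            simp only [MultiTrace.prepend]
            by_cases hl : l = a.lifeline
            · simp only [hl, if_true, List.mem_cons]; exact Or.inr (hl ▸ ha')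
            · simp only [hl, if_false]; exact ha'
        refine IH (hLfin.toFinset.card + ∑ l ∈ hLfin.toFinset, (μ' l).length) ?_
          _ hLfin _ _ (executes_lifelines hex hi) hμ' le_rfl
        omega
    refine Set.Finite.subset ((hS.biUnion hreach).insert (Vertex.node L i μ)) ?_
    intro x hx
    rcases Relation.ReflTransGen.cases_head hx with rfl | ⟨w, hvw, hwx⟩
    · exact Set.mem_insert _ _
    · exact Set.mem_insert_of_mem _ (Set.mem_biUnion hvw hwx)
  exact main _ L hLfin i μ hi hμ le_rfl

end RV
end
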